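/- Let X be a compact metric space and M(X) the space of Borel probability measures on X with the weak*-topology. The sets of the form W(U_1,…,U_k; η_1,…,η_k) = {μ ∈ M(X) : μ(U_i) > η_i for all i ∈ [k]}, where k ≥ 1, U_1,…,U_k are nonempty pairwise disjoint open subsets of X and η_1,…,η_k are positive real numbers with η_1 + η_2 + … + η_k < 1, form a basis for the weak*-topology on M(X). -/

import Mathlib

set_option maxHeartbeats 1000000

open MeasureTheory Topology Filter Set BoundedContinuousFunction
open scoped ENNReal NNReal

lemma isOpen_lt_prob {X : Type*} [MetricSpace X] [MeasurableSpace X] [BorelSpace X]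
    {U : Set X} (hU : IsOpen U) (r : ℝ≥0) :
    IsOpen {ν : ProbabilityMeasure X | r < ν U} := by
  rw [isOpen_iff_mem_nhds]
  intro ν hν
  have h := ProbabilityMeasure.le_liminf_measure_open_of_tendsto
    (μ := ν) (μs := id) (L := 𝓝 ν) tendsto_id hU
  have hr : (r : ℝ≥0∞) < (ν : Measure X) U := by
    rw [← ProbabilityMeasure.ennreal_coeFn_eq_coeFn_toMeasure]
    exact_mod_cast hν
  have := eventually_lt_of_lt_liminf (lt_of_lt_of_le hr h)
  filter_upwards [this] with ρ hρ
  rw [← ProbabilityMeasure.ennreal_coeFn_eq_coeFn_toMeasure] at hρ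
  exact_mod_cast hρ

lemma nhds_sub {X : Type*} [MetricSpace X] [MeasurableSpace X] [BorelSpace X]
    (μ : ProbabilityMeasure X) {V : Set (ProbabilityMeasure X)} (hV : V ∈ 𝓝 μ) :
    ∃ (n : ℕ) (f : Fin n → (X →ᵇ ℝ)) (ε : ℝ), 0 < ε ∧
      {ν : ProbabilityMeasure X |
        ∀ j, |∫ x, f j x ∂(ν : Measure X) - ∫ x, f j x ∂(μ : Measure X)| < ε} ⊆ V := by
  set P := (X →ᵇ ℝ) × {e : ℝ // 0 < e} with hP
  set N : P → Set (ProbabilityMeasure X) := fun p =>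
    {ν | |∫ x, p.1 x ∂(ν : Measure X) - ∫ x, p.1 x ∂(μ : Measure X)| < p.2.1} with hN
  have hle : (⨅ p : P, 𝓟 (N p)) ≤ 𝓝 μ := by
    have : Tendsto id (⨅ p : P, 𝓟 (N p)) (𝓝 μ) := by
      rw [ProbabilityMeasure.tendsto_iff_forall_integral_tendsto]
      intro f
      rw [Metric.tendsto_nhds]
      intro ε hε
      have : N (f, ⟨ε, hε⟩) ∈ (⨅ p : P, 𝓟 (N p)) :=
        mem_iInf_of_mem (f, ⟨ε, hε⟩) (mem_principal_self _)
      filter_upwards [this] with ν hν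
      simpa [Real.dist_eq, hN] using hν
    exact this
  have hVF : V ∈ ⨅ p : P, 𝓟 (N p) := hle hV
  rw [Filter.mem_iInf_finite] at hVF
  obtain ⟨t, ht⟩ := hVF
  rw [Filter.iInf_principal_finset, mem_principal] at ht
  by_cases h0 : t.Nonempty
  · refine ⟨t.card, fun j => ((t.equivFin.symm j : P).1), t.inf' h0 (fun p => p.2.1), ?_, ?_⟩
    · rw [Finset.lt_inf'_iff]
      exact fun p _ => p.2.2
    · intro ν hν
      apply ht
      rw [mem_iInter₂]
      intro p hp
      have h1 := hν (t.equivFin ⟨p, hp⟩)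
      simp only [Equiv.symm_apply_apply] at h1
      have h2 : t.inf' h0 (fun p => p.2.1) ≤ p.2.1 := Finset.inf'_le _ hp
      exact lt_of_lt_of_le h1 h2
  · refine ⟨0, fun j => 0, 1, one_pos, fun ν _ => ht ?_⟩
    simp [Finset.not_nonempty_iff_eq_empty.mp h0]

lemma ae_partition {X : Type*} [MetricSpace X] [CompactSpace X]
    [MeasurableSpace X] [BorelSpace X]
    (μ : ProbabilityMeasure X) {δ : ℝ} (hδ : 0 < δ) :
    ∃ (m : ℕ) (A : Fin m → Set X), 1 ≤ m ∧ (∀ l, IsOpen (A l)) ∧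
      Pairwise (Function.onFun Disjoint A) ∧
      (∀ l, ∀ y ∈ A l, ∀ z ∈ A l, dist y z < δ) ∧
      (μ : Measure X) (⋃ l, A l)ᶜ = 0 := by
  classical
  have hne : Nonempty X := μ.nonempty
  -- radii with null frontier
  have hrad : ∀ x : X, ∃ r : ℝ, r ∈ Ioo 0 (δ/4) ∧
      (μ : Measure X) (frontier (Metric.ball x r)) = 0 := by
    intro x
    obtain ⟨r, hr, hnull⟩ := exists_null_frontier_thickening (μ : Measure X) {x}
      (by linarith : (0:ℝ) < δ/4)
    refine ⟨r, hr, ?_⟩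
    rwa [Metric.thickening_singleton] at hnull
  choose r hr hrnull using hrad
  -- finite subcover
  have hcov : univ ⊆ ⋃ x : X, Metric.ball x (r x) := by
    intro x _
    exact mem_iUnion.mpr ⟨x, Metric.mem_ball_self (hr x).1⟩
  obtain ⟨t, htcov⟩ := isCompact_univ.elim_finite_subcover
    (fun x : X => Metric.ball x (r x)) (fun x => Metric.isOpen_ball) hcov
  have htne : t.Nonempty := by
    by_contra h
    rw [Finset.not_nonempty_iff_eq_empty] at h
    obtain ⟨x⟩ := hne
    have := htcov (mem_univ x)
    simp [h] at this
  set m := t.card with hm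
  have hm1 : 1 ≤ m := Finset.card_pos.mpr htne
  set e : Fin m → t := fun l => t.equivFin.symm l with he
  set c : Fin m → X := fun l => (e l : X) with hc
  set V : Fin m → Set X := fun l => Metric.ball (c l) (r (c l)) with hV
  have hVopen : ∀ l, IsOpen (V l) := fun l => Metric.isOpen_ball
  have hVcov : ∀ x : X, ∃ l, x ∈ V l := by
    intro x
    have := htcov (mem_univ x)
    rw [mem_iUnion₂] at this
    obtain ⟨y, hy, hxy⟩ := this
    exact ⟨t.equivFin ⟨y, hy⟩, by simp [hV, hc, he, Equiv.symm_apply_apply, hxy]⟩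
  set A : Fin m → Set X := fun l => V l \ closure (⋃ l' : Fin m, ⋃ (_ : l' < l), V l') with hA
  refine ⟨m, A, hm1, fun l => (hVopen l).sdiff isClosed_closure, ?_, ?_, ?_⟩
  · -- pairwise disjoint
    intro i j hij
    wlog hlt : i < j generalizing i j
    · exact (this hij.symm (hij.lt_or_gt.resolve_left hlt)).symm
    rw [Function.onFun, Set.disjoint_left]
    intro x hxi hxj
    apply hxj.2
    apply subset_closure
    exact mem_iUnion₂.mpr ⟨i, hlt, hxi.1⟩
  · -- small diameter
    intro l y hy z hz
    have h1 : dist y (c l) < δ/4 := lt_trans (Metric.mem_ball.mp hy.1) (hr (c l)).2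
    have h2 : dist z (c l) < δ/4 := lt_trans (Metric.mem_ball.mp hz.1) (hr (c l)).2
    calc dist y z ≤ dist y (c l) + dist z (c l) := dist_triangle_right _ _ _
    _ < δ := by linarith
  · -- null complement
    have hsub : (⋃ l, A l)ᶜ ⊆ ⋃ l, frontier (V l) := by
      intro x hx
      rw [mem_compl_iff, mem_iUnion] at hx
      push_neg at hx
      set s : Finset (Fin m) := Finset.univ.filter (fun l => x ∈ closure (V l)) with hs
      have hsne : s.Nonempty := by
        obtain ⟨l, hl⟩ := hVcov x
        exact ⟨l, by simp [hs, subset_closure hl]⟩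
      set l₀ := s.min' hsne with hl₀
      have hxc : x ∈ closure (V l₀) := by
        have := s.min'_mem hsne
        simp [hs] at this
        exact this
      have hxV : x ∉ V l₀ := by
        intro hxV
        have hxA := hx l₀
        rw [hA, mem_diff] at hxA
        push_neg at hxA
        have hcl := hxA hxV
        rw [show (⋃ l' : Fin m, ⋃ (_ : l' < l₀), V l') = ⋃ l' ∈ Finset.univ.filter (· < l₀), V l'
            by simp, Finset.closure_biUnion, mem_iUnion₂] at hcl
        obtain ⟨l', hl', hxl'⟩ := hcl
        simp only [Finset.mem_filter, Finset.mem_univ, true_and] at hl'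
        have : l₀ ≤ l' := s.min'_le l' (by simp [hs, hxl'])
        exact absurd this (not_le.mpr hl')
      exact mem_iUnion.mpr ⟨l₀, by rw [(hVopen l₀).frontier_eq]; exact ⟨hxc, hxV⟩⟩
    refine measure_mono_null hsub (measure_iUnion_null fun l => ?_)
    exact hrnull (c l)

lemma key {X : Type*} [MetricSpace X] [CompactSpace X]
    [MeasurableSpace X] [BorelSpace X]
    (μ : ProbabilityMeasure X) {n : ℕ} (f : Fin n → (X →ᵇ ℝ)) {ε : ℝ} (hε : 0 < ε) :
    ∃ (k : ℕ) (U : Fin k → Set X) (η : Fin k → ℝ≥0),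
      1 ≤ k ∧ (∀ i, IsOpen (U i)) ∧ (∀ i, (U i).Nonempty) ∧
      (Pairwise fun i j => Disjoint (U i) (U j)) ∧
      (∀ i, 0 < η i) ∧ (∑ i, η i) < 1 ∧
      (∀ i, η i < μ (U i)) ∧
      ∀ ν : ProbabilityMeasure X, (∀ i, η i < ν (U i)) →
        ∀ j, |∫ x, f j x ∂(ν : Measure X) - ∫ x, f j x ∂(μ : Measure X)| < ε := by
  classical
  -- uniform continuity
  have hε4 : 0 < ε / 4 := by linarith
  obtain ⟨δ, hδ, hosc⟩ : ∃ δ > 0, ∀ a b : X, dist a b < δ → ∀ j, |f j a - f j b| < ε / 4 := by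
    have hF : Continuous (fun x : X => fun j : Fin n => f j x) :=
      continuous_pi fun j => (f j).continuous
    have hUF := CompactSpace.uniformContinuous_of_continuous hF
    rw [Metric.uniformContinuous_iff] at hUF
    obtain ⟨δ, hδ, H⟩ := hUF (ε / 4) hε4
    refine ⟨δ, hδ, fun a b hab j => ?_⟩
    have h1 := H hab
    have h2 := dist_le_pi_dist (fun j : Fin n => f j a) (fun j => f j b) j
    rw [Real.dist_eq] at h2
    linarith
  obtain ⟨m, A, hm1, hAopen, hAdisj, hAdiam, hAnull⟩ := ae_partition μ hδ
  have hmR : (1 : ℝ) ≤ (m : ℝ) := by exact_mod_cast hm1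
  -- bound on functions
  set C : ℝ := 1 + ∑ j, ‖f j‖ with hC
  have hC1 : 1 ≤ C := by
    have : (0:ℝ) ≤ ∑ j, ‖f j‖ := Finset.sum_nonneg fun j _ => norm_nonneg _
    linarith
  have hC0 : 0 < C := by linarith
  have hgb : ∀ (j : Fin n) (x : X), |f j x| ≤ C := by
    intro j x
    have h1 : |f j x| ≤ ‖f j‖ := by
      rw [← Real.norm_eq_abs]; exact (f j).norm_coe_le_norm x
    have h2 : ‖f j‖ ≤ ∑ j', ‖f j'‖ :=
      Finset.single_le_sum (fun j' _ => norm_nonneg (f j')) (Finset.mem_univ j)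
    linarith
  -- choice of ε'
  set ε' : ℝ := min (1 / (2 * m)) (ε / (20 * C * m ^ 2)) with hε'def
  have hε'pos : 0 < ε' := by
    apply lt_min
    · positivity
    · positivity
  have hε'half : ε' ≤ 1 / (2 * m) := min_le_left _ _
  have hε'key : 20 * (C * (m:ℝ) ^ 2 * ε') ≤ ε := by
    have h1 : ε' ≤ ε / (20 * C * m ^ 2) := min_le_right _ _
    have h2 : (0:ℝ) < 20 * C * m ^ 2 := by positivity
    calc 20 * (C * (m:ℝ) ^ 2 * ε') = (20 * C * m ^ 2) * ε' := by ring
    _ ≤ (20 * C * m ^ 2) * (ε / (20 * C * m ^ 2)) := by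
        exact mul_le_mul_of_nonneg_left h1 h2.le
    _ = ε := by field_simp
  set ε'' : ℝ≥0 := ε'.toNNReal with hε''
  have hε''coe : (ε'' : ℝ) = ε' := Real.coe_toNNReal _ hε'pos.le
  have hε''pos : 0 < ε'' := by
    rwa [← NNReal.coe_lt_coe, hε''coe, NNReal.coe_zero]
  -- masses
  set a : Fin m → ℝ≥0 := fun l => μ (A l) with ha
  have hAmeas : ∀ l, MeasurableSet (A l) := fun l => (hAopen l).measurableSet
  have hUnion : (μ : Measure X) (⋃ l, A l) = 1 := by
    have h1 := measure_add_measure_compl (μ := (μ : Measure X))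
      (MeasurableSet.iUnion fun l => hAmeas l)
    rw [hAnull, add_zero] at h1
    simp [h1]
  have htotal : ∑ l, a l = 1 := by
    have h1 : (μ : Measure X) (⋃ l, A l) = ∑' l, (μ : Measure X) (A l) :=
      measure_iUnion hAdisj hAmeas
    rw [hUnion, tsum_fintype] at h1
    have h2 : ∀ l, (μ : Measure X) (A l) = (a l : ℝ≥0∞) := fun l =>
      (ProbabilityMeasure.ennreal_coeFn_eq_coeFn_toMeasure μ (A l)).symm
    rw [Finset.sum_congr rfl (fun l _ => h2 l)] at h1
    exact_mod_cast h1.symm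
  have htotalR : ∑ l, ((a l : ℝ≥0) : ℝ) = 1 := by
    rw [← NNReal.coe_sum, htotal, NNReal.coe_one]
  -- the kept indices
  set K : Finset (Fin m) := Finset.univ.filter (fun l => ε'' < a l) with hK
  have hKne : K.Nonempty := by
    by_contra h
    rw [Finset.not_nonempty_iff_eq_empty] at h
    have hall : ∀ l, (a l : ℝ) ≤ ε' := by
      intro l
      have : ¬ (ε'' < a l) := by
        intro hcon
        have : l ∈ K := by simp [hK, hcon]
        simp [h] at this
      rw [not_lt, ← NNReal.coe_le_coe, hε''coe] at this
      exact this
    have h1 : (1:ℝ) ≤ ∑ l : Fin m, ε' := by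
      rw [← htotalR]; exact Finset.sum_le_sum fun l _ => hall l
    rw [Finset.sum_const, Finset.card_univ, Fintype.card_fin, nsmul_eq_mul] at h1
    have h2 : (m:ℝ) * ε' ≤ (m:ℝ) * (1 / (2*m)) :=
      mul_le_mul_of_nonneg_left hε'half (by positivity)
    have h3 : (m:ℝ) * (1/(2*m)) = 1/2 := by field_simp
    linarith
  set k := K.card with hk
  have hk1 : 1 ≤ k := Finset.card_pos.mpr hKne
  have hkm : k ≤ m := by
    calc k ≤ Finset.univ.card := Finset.card_le_card (Finset.subset_univ K)
    _ = m := by simp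
  set eK : Fin k → K := fun i => K.equivFin.symm i with heK
  set U : Fin k → Set X := fun i => A (eK i) with hU
  set η : Fin k → ℝ≥0 := fun i => a (eK i) - ε'' with hη
  have hmemK : ∀ i, (eK i : Fin m) ∈ K := fun i => (eK i).2
  have hlt' : ∀ l ∈ K, ε'' < a l := by
    intro l hl
    simpa [hK] using hl
  have hzex : ∀ l ∈ K, ∃ x, x ∈ A l := by
    intro l hl
    rw [← Set.nonempty_def, nonempty_iff_ne_empty]
    intro hemp
    have h0 : a l = 0 := by simp [ha, hemp]
    have := hlt' l hl
    rw [h0] at this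
    exact absurd this (by simp)
  have hXne : Nonempty X := μ.nonempty
  choose! z hzmem using hzex
  -- sums over Fin k equal sums over K
  have hsumeq : ∀ (h : Fin m → ℝ), ∑ i : Fin k, h (eK i) = ∑ l ∈ K, h l := by
    intro h
    rw [← Finset.sum_coe_sort K h]
    exact Equiv.sum_comp K.equivFin.symm (fun x : K => h x)
  refine ⟨k, U, η, hk1, fun i => hAopen _, fun i => ⟨z _, hzmem _ (hmemK i)⟩, ?_, ?_, ?_, ?_, ?_⟩
  · -- pairwise disjoint
    intro i j hij
    have hne : (eK i : Fin m) ≠ (eK j : Fin m) := fun hcon =>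
      hij (K.equivFin.symm.injective (Subtype.ext hcon))
    exact hAdisj hne
  · -- η positive
    intro i
    exact tsub_pos_of_lt (hlt' _ (hmemK i))
  · -- sum < 1
    rw [← NNReal.coe_lt_coe, NNReal.coe_sum, NNReal.coe_one]
    have hcoe : ∀ i : Fin k, ((η i : ℝ≥0) : ℝ) = (a (eK i) : ℝ) - ε' := by
      intro i
      rw [hη, NNReal.coe_sub (hlt' _ (hmemK i)).le, hε''coe]
    rw [Finset.sum_congr rfl (fun i _ => hcoe i), Finset.sum_sub_distrib]
    rw [hsumeq (fun l => (a l : ℝ))]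
    have h1 : ∑ l ∈ K, (a l : ℝ) ≤ 1 := by
      rw [← htotalR]
      exact Finset.sum_le_sum_of_subset_of_nonneg (Finset.subset_univ K)
        (fun l _ _ => NNReal.coe_nonneg _)
    have h2 : ∑ _i : Fin k, ε' = k * ε' := by
      rw [Finset.sum_const, Finset.card_univ, Fintype.card_fin, nsmul_eq_mul]
    have h3 : (1:ℝ) ≤ (k:ℝ) := by exact_mod_cast hk1
    rw [h2]
    nlinarith [hε'pos]
  · -- η i < μ (U i)
    intro i
    exact tsub_lt_self (lt_of_le_of_lt zero_le (hlt' _ (hmemK i))) hε''pos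
  · -- the estimate
    intro ν hν j
    set g := f j with hg
    set b : ProbabilityMeasure X → Fin m → ℝ := fun ρ l => ((ρ : Measure X) (A l)).toReal
      with hb
    have hbco : ∀ (ρ : ProbabilityMeasure X) l, b ρ l = ((ρ (A l) : ℝ≥0) : ℝ) := fun ρ l => rfl
    have hbμ : ∀ l, b μ l = (a l : ℝ) := fun l => rfl
    have hbnn : ∀ (ρ : ProbabilityMeasure X) l, 0 ≤ b ρ l := fun ρ l => ENNReal.toReal_nonneg
    set B : Set X := ⋃ l ∈ K, A l with hB
    have hBmeas : MeasurableSet B := K.measurableSet_biUnion (fun l _ => hAmeas l)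
    have hsB : ∀ ρ : ProbabilityMeasure X, ((ρ : Measure X) B).toReal = ∑ l ∈ K, b ρ l := by
      intro ρ
      rw [hB, measure_biUnion_finset (hAdisj.set_pairwise _) (fun l _ => hAmeas l)]
      exact ENNReal.toReal_sum (fun l _ => measure_ne_top _ _)
    have hsle : ∀ ρ : ProbabilityMeasure X, ∑ l ∈ K, b ρ l ≤ 1 := by
      intro ρ
      rw [← hsB]
      have := ENNReal.toReal_mono (a := (ρ : Measure X) B) ENNReal.one_ne_top prob_le_one
      simpa using this
    have hsnn : ∀ ρ : ProbabilityMeasure X, 0 ≤ ∑ l ∈ K, b ρ l :=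
      fun ρ => Finset.sum_nonneg fun l _ => hbnn ρ l
    have hcompl : ∀ ρ : ProbabilityMeasure X,
        ((ρ : Measure X) Bᶜ).toReal = 1 - ∑ l ∈ K, b ρ l := by
      intro ρ
      rw [prob_compl_eq_one_sub hBmeas,
        ENNReal.toReal_sub_of_le prob_le_one ENNReal.one_ne_top, ENNReal.toReal_one, hsB]
    -- main per-measure estimate
    have main : ∀ ρ : ProbabilityMeasure X,
        |∫ x, g x ∂(ρ : Measure X) - ∑ l ∈ K, g (z l) * b ρ l|
          ≤ ε/4 + C * (1 - ∑ l ∈ K, b ρ l) := by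
      intro ρ
      have hint : Integrable g (ρ : Measure X) := g.integrable _
      have hsplit := integral_add_compl hBmeas hint (f := fun x => g x)
      have hBsum : ∫ x in B, g x ∂(ρ:Measure X) = ∑ l ∈ K, ∫ x in A l, g x ∂(ρ:Measure X) :=
        integral_biUnion_finset K (fun l _ => hAmeas l) (hAdisj.set_pairwise _)
          (fun l _ => hint.integrableOn)
      have hper : ∀ l ∈ K, |∫ x in A l, g x ∂(ρ:Measure X) - g (z l) * b ρ l|
          ≤ ε/4 * b ρ l := by
        intro l hl
        have hconst : ∫ _ in A l, g (z l) ∂(ρ:Measure X) = b ρ l * g (z l) := by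
          rw [setIntegral_const, smul_eq_mul]; rfl
        have hdiff : ∫ x in A l, g x ∂(ρ:Measure X) - g (z l) * b ρ l
            = ∫ x in A l, (g x - g (z l)) ∂(ρ:Measure X) := by
          rw [integral_sub hint.integrableOn
            (integrableOn_const (measure_ne_top _ _)), hconst]
          ring
        rw [hdiff, ← Real.norm_eq_abs]
        have hbd : ∀ x ∈ A l, ‖g x - g (z l)‖ ≤ ε/4 := by
          intro x hx
          rw [Real.norm_eq_abs]
          exact (hosc x (z l) (hAdiam l x hx (z l) (hzmem l hl)) j).le
        exact norm_setIntegral_le_of_norm_le_const (μ := (ρ:Measure X)) (s := A l)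
          (measure_lt_top _ _) hbd
      calc |∫ x, g x ∂(ρ:Measure X) - ∑ l ∈ K, g (z l) * b ρ l|
          = |(∫ x in B, g x ∂(ρ:Measure X) - ∑ l ∈ K, g (z l) * b ρ l)
              + ∫ x in Bᶜ, g x ∂(ρ:Measure X)| := by rw [← hsplit]; ring_nf
        _ ≤ |∫ x in B, g x ∂(ρ:Measure X) - ∑ l ∈ K, g (z l) * b ρ l|
              + |∫ x in Bᶜ, g x ∂(ρ:Measure X)| := abs_add_le _ _
        _ ≤ ε/4 + C * (1 - ∑ l ∈ K, b ρ l) := by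
            have h1 : |∫ x in B, g x ∂(ρ:Measure X) - ∑ l ∈ K, g (z l) * b ρ l| ≤ ε/4 := by
              rw [hBsum, ← Finset.sum_sub_distrib]
              calc |∑ l ∈ K, (∫ x in A l, g x ∂(ρ:Measure X) - g (z l) * b ρ l)|
                  ≤ ∑ l ∈ K, |∫ x in A l, g x ∂(ρ:Measure X) - g (z l) * b ρ l| :=
                    Finset.abs_sum_le_sum_abs _ _
                _ ≤ ∑ l ∈ K, ε/4 * b ρ l := Finset.sum_le_sum hper
                _ = ε/4 * ∑ l ∈ K, b ρ l := by rw [Finset.mul_sum]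
                _ ≤ ε/4 := by nlinarith [hsle ρ, hsnn ρ]
            have h2 : |∫ x in Bᶜ, g x ∂(ρ:Measure X)| ≤ C * (1 - ∑ l ∈ K, b ρ l) := by
              rw [← Real.norm_eq_abs, ← hcompl ρ]
              exact norm_setIntegral_le_of_norm_le_const (measure_lt_top _ _)
                (fun x _ => by rw [Real.norm_eq_abs]; exact hgb j x)
            exact add_le_add h1 h2
    -- mass comparisons
    have hνa : ∀ l ∈ K, (a l : ℝ) - ε' ≤ b ν l := by
      intro l hl
      have := hν (K.equivFin ⟨l, hl⟩)
      rw [hη, hU] at this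
      simp only [heK, Equiv.symm_apply_apply] at this
      rw [← NNReal.coe_lt_coe, NNReal.coe_sub (hlt' l hl).le, hε''coe] at this
      rw [hbco]
      exact this.le
    have hsμ : 1 - (m:ℝ) * ε' ≤ ∑ l ∈ K, b μ l := by
      have h1 : ∑ l ∈ Finset.univ \ K, b μ l ≤ ∑ l ∈ Finset.univ \ K, ε' := by
        apply Finset.sum_le_sum
        intro l hl
        rw [Finset.mem_sdiff] at hl
        have : ¬ (ε'' < a l) := fun hcon => hl.2 (by simp [hK, hcon])
        rw [not_lt, ← NNReal.coe_le_coe, hε''coe] at this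
        rw [hbμ]
        exact this
      have h2 : ∑ l ∈ Finset.univ \ K, b μ l + ∑ l ∈ K, b μ l = 1 := by
        rw [Finset.sum_sdiff_eq_sub (Finset.subset_univ K)]
        have : ∑ l : Fin m, b μ l = 1 := by
          rw [Finset.sum_congr rfl (fun l _ => hbμ l)]
          exact htotalR
        rw [this]
        ring
      have h3 : ∑ l ∈ Finset.univ \ K, (ε':ℝ) ≤ m * ε' := by
        rw [Finset.sum_const, nsmul_eq_mul]
        have : ((Finset.univ \ K).card : ℝ) ≤ (m:ℝ) := by
          have := Finset.card_le_card (Finset.subset_univ (Finset.univ \ K))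
          simp only [Finset.card_univ, Fintype.card_fin] at this
          exact_mod_cast this
        nlinarith [hε'pos]
      linarith
    have hsν : 1 - 2 * (m:ℝ) * ε' ≤ ∑ l ∈ K, b ν l := by
      have h1 : ∑ l ∈ K, ((a l : ℝ) - ε') ≤ ∑ l ∈ K, b ν l :=
        Finset.sum_le_sum hνa
      have h2 : ∑ l ∈ K, ((a l : ℝ) - ε') = ∑ l ∈ K, (a l : ℝ) - k * ε' := by
        rw [Finset.sum_sub_distrib, Finset.sum_const, nsmul_eq_mul, ← hk]
      have h3 : ∑ l ∈ K, (b μ l) = ∑ l ∈ K, (a l : ℝ) :=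
        Finset.sum_congr rfl (fun l _ => hbμ l)
      have h4 : (k:ℝ) ≤ (m:ℝ) := by exact_mod_cast hkm
      nlinarith [hsμ, hε'pos]
    have hdiffbd : ∀ l ∈ K, |b ν l - b μ l| ≤ 2 * (m:ℝ) * ε' := by
      intro l hl
      have hup : b ν l - b μ l ≤ 2 * (m:ℝ) * ε' := by
        have h1 : ∑ l' ∈ K.erase l, b ν l' + b ν l = ∑ l' ∈ K, b ν l' :=
          Finset.sum_erase_add K _ hl
        have h2 : ∑ l' ∈ K.erase l, ((a l' : ℝ) - ε') ≤ ∑ l' ∈ K.erase l, b ν l' :=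
          Finset.sum_le_sum (fun l' hl' => hνa l' (Finset.mem_of_mem_erase hl'))
        have h3 : ∑ l' ∈ K.erase l, ((a l' : ℝ) - ε')
            = (∑ l' ∈ K, (a l' : ℝ)) - (a l : ℝ) - (K.erase l).card * ε' := by
          rw [Finset.sum_sub_distrib, Finset.sum_const, nsmul_eq_mul,
            ← Finset.sum_erase_add K _ hl]
          ring
        have h4 : ((K.erase l).card : ℝ) ≤ (m : ℝ) := by
          have := Finset.card_le_card (Finset.subset_univ (K.erase l))
          simp only [Finset.card_univ, Fintype.card_fin] at this
          exact_mod_cast this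
        have h5 : ∑ l' ∈ K, b μ l' = ∑ l' ∈ K, (a l' : ℝ) :=
          Finset.sum_congr rfl (fun l' _ => hbμ l')
        have h6 := hsle ν
        have h7 := hsμ
        rw [h5] at h7
        rw [hbμ]
        nlinarith [hε'pos]
      have hlow : b μ l - b ν l ≤ ε' := by
        have := hνa l hl
        rw [hbμ]
        linarith
      rw [abs_le]
      constructor
      · nlinarith [hε'pos, hmR]
      · exact hup
    -- final computation
    set E : ℝ := C * (m:ℝ)^2 * ε' with hE
    have hEpos : 0 < E := by positivity
    have hE4 : 5 * E ≤ ε / 4 := by linarith [hε'key]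
    have hb1 : C * (1 - ∑ l ∈ K, b ν l) ≤ 2 * E := by
      have h1 : 1 - ∑ l ∈ K, b ν l ≤ 2 * (m:ℝ) * ε' := by linarith [hsν]
      have h2 : C * (1 - ∑ l ∈ K, b ν l) ≤ C * (2 * (m:ℝ) * ε') :=
        mul_le_mul_of_nonneg_left h1 hC0.le
      have h3 : C * (2 * (m:ℝ) * ε') ≤ 2 * E := by
        rw [hE]; nlinarith [hε'pos, hmR, hC0]
      linarith
    have hb2 : C * (1 - ∑ l ∈ K, b μ l) ≤ E := by
      have h1 : 1 - ∑ l ∈ K, b μ l ≤ (m:ℝ) * ε' := by linarith [hsμ]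
      have h2 : C * (1 - ∑ l ∈ K, b μ l) ≤ C * ((m:ℝ) * ε') :=
        mul_le_mul_of_nonneg_left h1 hC0.le
      have h3 : C * ((m:ℝ) * ε') ≤ E := by
        rw [hE]; nlinarith [hε'pos, hmR, hC0]
      linarith
    have hb3 : |∑ l ∈ K, g (z l) * b ν l - ∑ l ∈ K, g (z l) * b μ l| ≤ 2 * E := by
      rw [← Finset.sum_sub_distrib]
      calc |∑ l ∈ K, (g (z l) * b ν l - g (z l) * b μ l)|
          ≤ ∑ l ∈ K, |g (z l) * b ν l - g (z l) * b μ l| := Finset.abs_sum_le_sum_abs _ _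
        _ ≤ ∑ l ∈ K, C * (2 * (m:ℝ) * ε') := by
            apply Finset.sum_le_sum
            intro l hl
            rw [← mul_sub, abs_mul]
            have := mul_le_mul (hgb j (z l)) (hdiffbd l hl) (abs_nonneg _)
              (le_trans (by norm_num) hC1)
            exact this
        _ = (k:ℝ) * (C * (2 * (m:ℝ) * ε')) := by
            rw [Finset.sum_const, nsmul_eq_mul, hk]
        _ ≤ 2 * E := by
            have h4 : (k:ℝ) ≤ (m:ℝ) := by exact_mod_cast hkm
            rw [hE]
            nlinarith [hε'pos, hmR, hC0, h4, Nat.cast_nonneg (α := ℝ) k]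
    have hmν := main ν
    have hmμ := main μ
    have t1 := abs_sub_le (∫ x, g x ∂(ν:Measure X)) (∑ l ∈ K, g (z l) * b ν l)
      (∫ x, g x ∂(μ:Measure X))
    have t2 := abs_sub_le (∑ l ∈ K, g (z l) * b ν l) (∑ l ∈ K, g (z l) * b μ l)
      (∫ x, g x ∂(μ:Measure X))
    have t3 : |∑ l ∈ K, g (z l) * b μ l - ∫ x, g x ∂(μ:Measure X)|
        = |∫ x, g x ∂(μ:Measure X) - ∑ l ∈ K, g (z l) * b μ l| := abs_sub_comm _ _
    have u1 : |∫ x, g x ∂(ν:Measure X) - ∑ l ∈ K, g (z l) * b ν l| ≤ ε/4 + 2*E :=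
      hmν.trans (add_le_add_right hb1 _)
    have u2 : |∫ x, g x ∂(μ:Measure X) - ∑ l ∈ K, g (z l) * b μ l| ≤ ε/4 + E :=
      hmμ.trans (add_le_add_right hb2 _)
    have u3 : |∑ l ∈ K, g (z l) * b μ l - ∫ x, g x ∂(μ:Measure X)| ≤ ε/4 + E :=
      t3.le.trans u2
    have s1 : |∫ x, g x ∂(ν:Measure X) - ∫ x, g x ∂(μ:Measure X)|
        ≤ (ε/4 + 2*E) + ((2*E) + (ε/4 + E)) :=
      (t1.trans (add_le_add_right t2 _)).trans (add_le_add u1 (add_le_add hb3 u3))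
    have s2 : (ε/4 + 2*E) + ((2*E) + (ε/4 + E)) < ε := by linarith only [hE4, hε]
    exact lt_of_le_of_lt s1 s2

theorem stmt18 {X : Type*} [MetricSpace X] [CompactSpace X]
    [MeasurableSpace X] [BorelSpace X] :
    TopologicalSpace.IsTopologicalBasis
      {W : Set (ProbabilityMeasure X) |
        ∃ (k : ℕ) (U : Fin k → Set X) (η : Fin k → ℝ≥0),
          1 ≤ k ∧ (∀ i, IsOpen (U i)) ∧ (∀ i, (U i).Nonempty) ∧
          (Pairwise fun i j => Disjoint (U i) (U j)) ∧
          (∀ i, 0 < η i) ∧ (∑ i, η i) < 1 ∧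
          W = {μ : ProbabilityMeasure X | ∀ i, η i < μ (U i)}} := by
  refine TopologicalSpace.isTopologicalBasis_of_isOpen_of_nhds ?_ ?_
  · rintro W ⟨k, U, η, hk, hUo, hUne, hdisj, hηpos, hsum, rfl⟩
    have hre : {μ : ProbabilityMeasure X | ∀ i, η i < μ (U i)}
        = ⋂ i, {μ : ProbabilityMeasure X | η i < μ (U i)} := by
      ext μ; simp
    rw [hre]
    exact isOpen_iInter_of_finite (fun i => isOpen_lt_prob (hUo i) (η i))
  · intro μ V hμV hVopen
    obtain ⟨n, f, ε, hε, hsub⟩ := nhds_sub μ (hVopen.mem_nhds hμV)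
    obtain ⟨k, U, η, hk, hUo, hUne, hdisj, hηpos, hsum, hμW, hest⟩ := key μ f hε
    exact ⟨{ν | ∀ i, η i < ν (U i)}, ⟨k, U, η, hk, hUo, hUne, hdisj, hηpos, hsum, rfl⟩,
      hμW, fun ν hν => hsub (fun j => hest ν hν j)⟩
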